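/- Let V be uniformly distributed on the unit sphere S^{k−1} ⊂ ℝ^k, let δ ∈ (0, 1/√2] and k ≥ 2δ^{−2}. Then for any x ∈ S^{k−1}: P(|⟨V,x⟩| ≥ δ) ≥ exp(−2δ²k). -/

import Mathlib

open MeasureTheory Metric
open scoped RealInnerProductSpace

/-- The uniform probability measure on the unit sphere of `ℝᵏ`. -/
noncomputable def unifSphere (k : ℕ) :
    Measure (sphere (0 : EuclideanSpace ℝ (Fin k)) 1) :=
  (((volume : Measure (EuclideanSpace ℝ (Fin k))).toSphere) Set.univ)⁻¹ •
    (volume : Measure (EuclideanSpace ℝ (Fin k))).toSphere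

namespace Stmt12Aux

open Real Set
open scoped Pointwise

/-! ### Elementary real estimates -/

/-- Chord inequality: `exp(-(2 log 2) u) ≤ 1 - u` on `[0, 1/2]`. -/
lemma chord {u : ℝ} (h0 : 0 ≤ u) (h1 : u ≤ 1 / 2) :
    Real.exp (-(2 * Real.log 2) * u) ≤ 1 - u := by
  have h := convexOn_exp.2 (Set.mem_univ (0 : ℝ)) (Set.mem_univ (-Real.log 2))
    (by linarith : (0 : ℝ) ≤ 1 - 2 * u) (by linarith : (0 : ℝ) ≤ 2 * u) (by ring)
  simp only [smul_eq_mul, mul_zero, zero_add, Real.exp_zero] at h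
  rw [Real.exp_neg, Real.exp_log (by norm_num : (0 : ℝ) < 2)] at h
  calc Real.exp (-(2 * Real.log 2) * u) = Real.exp (2 * u * -Real.log 2) := by ring_nf
    _ ≤ (1 - 2 * u) * 1 + 2 * u * 2⁻¹ := h
    _ = 1 - u := by ring

lemma exp_two_ge : (7.38 : ℝ) ≤ Real.exp 2 := by
  have h := Real.exp_one_gt_d9
  have h2 : Real.exp 2 = Real.exp 1 * Real.exp 1 := by
    rw [← Real.exp_add]; norm_num
  nlinarith [Real.exp_pos 1]

lemma exp_three_ge : (20.08 : ℝ) ≤ Real.exp 3 := by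
  have h := Real.exp_one_gt_d9
  have h2 : Real.exp 3 = Real.exp 1 * Real.exp 1 * Real.exp 1 := by
    rw [← Real.exp_add, ← Real.exp_add]; norm_num
  nlinarith [Real.exp_pos 1]

lemma exp_e39 : (38 : ℝ) ≤ Real.exp 3.9 := by
  have h1 := exp_three_ge
  have h2 : (1.9 : ℝ) ≤ Real.exp 0.9 := by
    have := Real.add_one_le_exp (0.9 : ℝ); linarith
  have h3 : Real.exp (3.9 : ℝ) = Real.exp 3 * Real.exp 0.9 := by
    rw [← Real.exp_add]; norm_num
  nlinarith [Real.exp_pos 3]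

set_option maxHeartbeats 1000000 in
/-- The core numeric inequality. -/
lemma core {N u : ℝ} (hN : 3 ≤ N) (hu0 : 0 < u) (hu : u ≤ 1 / 2)
    (hv : 2 ≤ u * (N + 1)) :
    Real.exp (-(2 * u * (N + 1))) * Real.sqrt (2 * π / N) *
        ((N + 2) * Real.sqrt (u + 4 * (1 - u) / (N + 2)))
      ≤ 2 * (1 - Real.exp (-2)) * (1 - u) ^ ((N + 2) / 2) := by
  have hN0 : (0 : ℝ) < N := by linarith
  have hN2 : (0 : ℝ) < N + 2 := by linarith
  have hv' : 3 / 2 ≤ u * N := by nlinarith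
  have hlog2 : Real.log 2 < 0.7 := by
    have := Real.log_two_lt_d9; linarith
  have hlog2' : 0 < Real.log 2 := Real.log_pos (by norm_num)
  have h86 : (0.86 : ℝ) ≤ 1 - Real.exp (-2) := by
    have h := exp_two_ge
    rw [Real.exp_neg]
    have h0 : (0:ℝ) < Real.exp 2 := Real.exp_pos 2
    have h2 : (Real.exp 2)⁻¹ ≤ (7.38 : ℝ)⁻¹ := by
      apply inv_anti₀ (by norm_num) h
    have h3 : ((7.38 : ℝ))⁻¹ ≤ 0.14 := by norm_num
    linarith
  have h2e : (0:ℝ) < 2 * (1 - Real.exp (-2)) := by linarith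
  -- replace (1-u)^p by exp lower bound
  have hp0 : (0 : ℝ) ≤ (N + 2) / 2 := by positivity
  have h1 : Real.exp (-(Real.log 2) * u * (N + 2)) ≤ (1 - u) ^ ((N + 2) / 2) := by
    have hch := chord hu0.le hu
    have h2 := Real.rpow_le_rpow (Real.exp_pos _).le hch hp0
    calc Real.exp (-(Real.log 2) * u * (N + 2))
        = Real.exp (-(2 * Real.log 2) * u * ((N + 2) / 2)) := by ring_nf
      _ = Real.exp (-(2 * Real.log 2) * u) ^ ((N + 2) / 2) := by
          rw [← Real.exp_mul]
      _ ≤ (1 - u) ^ ((N + 2) / 2) := h2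
  -- the sqrt part
  have hin0 : (0 : ℝ) ≤ u + 4 * (1 - u) / (N + 2) := by
    have h4 : (0:ℝ) ≤ 4 * (1 - u) / (N + 2) := by
      apply div_nonneg (by linarith) hN2.le
    linarith
  have hsq : Real.sqrt (2 * π / N) * ((N + 2) * Real.sqrt (u + 4 * (1 - u) / (N + 2)))
      = Real.sqrt ((2 * π / N) * ((N + 2) ^ 2 * (u + 4 * (1 - u) / (N + 2)))) := by
    have hπN : (0:ℝ) ≤ 2 * π / N := div_nonneg (by positivity) hN0.le
    rw [Real.sqrt_mul hπN, Real.sqrt_mul (by positivity), Real.sqrt_sq hN2.le]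
  set R : ℝ := 2 * (1 - Real.exp (-2)) *
      Real.exp (2 * u * (N + 1) - Real.log 2 * u * (N + 2)) with hR_def
  have hRpos : 0 < R := mul_pos h2e (Real.exp_pos _)
  have hS : Real.sqrt (2 * π / N) * ((N + 2) * Real.sqrt (u + 4 * (1 - u) / (N + 2)))
      ≤ R := by
    rw [hsq]
    have hpi := Real.pi_lt_d2
    have hpi3 := Real.pi_gt_three
    have harg : (2 * π / N) * ((N + 2) ^ 2 * (u + 4 * (1 - u) / (N + 2)))
        ≤ 17.6 * (u * N) + 43 := by
      have hNN : (N + 2) ^ 2 ≤ 25 / 9 * N ^ 2 := by nlinarith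
      have e1 : (N + 2) ^ 2 * (u + 4 * (1 - u) / (N + 2))
          = (N + 2) ^ 2 * u + 4 * (1 - u) * (N + 2) := by
        field_simp
      rw [e1, div_mul_eq_mul_div, div_le_iff₀ hN0]
      have hq : (0:ℝ) ≤ N ^ 2 * u := by positivity
      have a1 : (N + 2) ^ 2 * u ≤ 25 / 9 * (N ^ 2 * u) := by
        have := mul_le_mul_of_nonneg_right hNN hu0.le
        linarith
      have a2 : 2 * π * ((N + 2) ^ 2 * u) ≤ 6.3 * (25 / 9 * (N ^ 2 * u)) := by
        apply mul_le_mul (by linarith) a1 (by positivity) (by norm_num)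
      have a2' : 6.3 * (25 / 9 * (N ^ 2 * u)) ≤ 17.6 * (N ^ 2 * u) := by linarith
      have a3 : 4 * (1 - u) * (N + 2) ≤ 4 * (N + 2) := by nlinarith
      have a30 : (0:ℝ) ≤ 4 * (1 - u) * (N + 2) := by
        apply mul_nonneg (by linarith) (by linarith)
      have a4 : 2 * π * (4 * (1 - u) * (N + 2)) ≤ 6.3 * (4 * (N + 2)) := by
        apply mul_le_mul (by linarith) a3 a30 (by norm_num)
      have a4' : 6.3 * (4 * (N + 2)) ≤ 43 * N := by linarith
      have expand : 2 * π * ((N + 2) ^ 2 * u + 4 * (1 - u) * (N + 2))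
          = 2 * π * ((N + 2) ^ 2 * u) + 2 * π * (4 * (1 - u) * (N + 2)) := by ring
      have rhs : (17.6 * (u * N) + 43) * N = 17.6 * (N ^ 2 * u) + 43 * N := by ring
      rw [expand, rhs]
      linarith
    have hexp_arg : 2.6 * (u * N) ≤ 2 * (2 * u * (N + 1) - Real.log 2 * u * (N + 2)) := by
      have hu2 : (0:ℝ) ≤ u * (N + 2) := by positivity
      have hl : 2 * Real.log 2 * (u * (N + 2)) ≤ 1.4 * (u * (N + 2)) :=
        mul_le_mul_of_nonneg_right (by linarith) hu2
      nlinarith [hl, hu0.le, hN0.le]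
    have hexp26 : 38 * (2.6 * (u * N) - 2.9) ≤ Real.exp (2.6 * (u * N)) := by
      have e1 : Real.exp (2.6 * (u * N))
          = Real.exp 3.9 * Real.exp (2.6 * (u * N) - 3.9) := by
        rw [← Real.exp_add]; ring_nf
      have e2 : (2.6 * (u * N) - 3.9) + 1 ≤ Real.exp (2.6 * (u * N) - 3.9) :=
        Real.add_one_le_exp _
      nlinarith [exp_e39, Real.exp_pos (2.6 * (u * N) - 3.9),
        mul_nonneg (sub_nonneg.2 exp_e39) (Real.exp_pos (2.6 * (u * N) - 3.9)).le]
    have hXR : (2 * π / N) * ((N + 2) ^ 2 * (u + 4 * (1 - u) / (N + 2))) ≤ R ^ 2 := by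
      have hRsq : R ^ 2 = (2 * (1 - Real.exp (-2))) ^ 2 *
          Real.exp (2 * (2 * u * (N + 1) - Real.log 2 * u * (N + 2))) := by
        rw [hR_def]
        have e3 : Real.exp (2 * (2 * u * (N + 1) - Real.log 2 * u * (N + 2)))
            = Real.exp (2 * u * (N + 1) - Real.log 2 * u * (N + 2)) *
              Real.exp (2 * u * (N + 1) - Real.log 2 * u * (N + 2)) := by
          rw [← Real.exp_add]; ring_nf
        rw [e3]; ring
      have hmono : Real.exp (2.6 * (u * N))
          ≤ Real.exp (2 * (2 * u * (N + 1) - Real.log 2 * u * (N + 2))) :=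
        Real.exp_le_exp.2 hexp_arg
      have hc : (2.95 : ℝ) ≤ (2 * (1 - Real.exp (-2))) ^ 2 := by
        nlinarith [h86, sq_nonneg (1 - Real.exp (-2) - 0.86)]
      have hlin : 17.6 * (u * N) + 43 ≤ 2.95 * (38 * (2.6 * (u * N) - 2.9)) := by
        linarith
      have hstep : 2.95 * (38 * (2.6 * (u * N) - 2.9)) ≤ 2.95 * Real.exp (2.6 * (u * N)) := by
        linarith [hexp26]
      have hstep2 : 2.95 * Real.exp (2.6 * (u * N)) ≤ (2 * (1 - Real.exp (-2))) ^ 2 *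
          Real.exp (2 * (2 * u * (N + 1) - Real.log 2 * u * (N + 2))) := by
        apply mul_le_mul hc hmono (Real.exp_pos _).le (by positivity)
      rw [hRsq]
      linarith
    calc Real.sqrt ((2 * π / N) * ((N + 2) ^ 2 * (u + 4 * (1 - u) / (N + 2))))
        ≤ Real.sqrt (R ^ 2) := Real.sqrt_le_sqrt hXR
      _ = R := Real.sqrt_sq hRpos.le
  -- combine
  have kk : Real.exp (-(2 * u * (N + 1))) * R
      = 2 * (1 - Real.exp (-2)) * Real.exp (-(Real.log 2) * u * (N + 2)) := by
    rw [hR_def]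
    calc Real.exp (-(2 * u * (N + 1))) *
          (2 * (1 - Real.exp (-2)) * Real.exp (2 * u * (N + 1) - Real.log 2 * u * (N + 2)))
        = 2 * (1 - Real.exp (-2)) * (Real.exp (-(2 * u * (N + 1))) *
            Real.exp (2 * u * (N + 1) - Real.log 2 * u * (N + 2))) := by ring
      _ = 2 * (1 - Real.exp (-2)) * Real.exp (-(Real.log 2) * u * (N + 2)) := by
          rw [← Real.exp_add]; ring_nf
  have hexp_pos : (0:ℝ) < Real.exp (-(2 * u * (N + 1))) := Real.exp_pos _
  calc Real.exp (-(2 * u * (N + 1))) * Real.sqrt (2 * π / N) *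
        ((N + 2) * Real.sqrt (u + 4 * (1 - u) / (N + 2)))
      = Real.exp (-(2 * u * (N + 1))) *
        (Real.sqrt (2 * π / N) * ((N + 2) * Real.sqrt (u + 4 * (1 - u) / (N + 2)))) := by
        ring
    _ ≤ Real.exp (-(2 * u * (N + 1))) * R :=
        mul_le_mul_of_nonneg_left hS hexp_pos.le
    _ = 2 * (1 - Real.exp (-2)) * Real.exp (-(Real.log 2) * u * (N + 2)) := kk
    _ ≤ 2 * (1 - Real.exp (-2)) * (1 - u) ^ ((N + 2) / 2) :=
        mul_le_mul_of_nonneg_left h1 h2e.le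

/-! ### Geometry in `ℝ × (Fin n → ℝ)` -/

/-- Sum of squares. -/
def Q {n : ℕ} (z : Fin n → ℝ) : ℝ := ∑ i, z i ^ 2

lemma Q_nonneg {n : ℕ} (z : Fin n → ℝ) : 0 ≤ Q z :=
  Finset.sum_nonneg fun i _ => sq_nonneg _

lemma continuous_Q {n : ℕ} : Continuous (Q (n := n)) := by
  unfold Q
  exact continuous_finset_sum _ fun i _ => ((continuous_apply i).pow 2)

lemma Q_smul {n : ℕ} (c : ℝ) (z : Fin n → ℝ) : Q (c • z) = c ^ 2 * Q z := by
  unfold Q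
  rw [Finset.mul_sum]
  refine Finset.sum_congr rfl fun i _ => ?_
  simp [mul_pow]

/-- Volume of the open unit euclidean ball, seen inside the `Pi` type. -/
noncomputable def W (n : ℕ) : ENNReal := volume {z : Fin n → ℝ | Q z < 1}

lemma measurableSet_Q_lt {n : ℕ} (r : ℝ) : MeasurableSet {z : Fin n → ℝ | Q z < r} :=
  (isOpen_lt continuous_Q continuous_const).measurableSet

lemma W_pos {n : ℕ} : 0 < W n := by
  have hsub : (Set.pi Set.univ fun _ : Fin n => Ioo (-(1/(n+1) : ℝ)) (1/(n+1)))
      ⊆ {z : Fin n → ℝ | Q z < 1} := by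
    intro z hz
    simp only [Set.mem_pi, Set.mem_univ, forall_true_left, Set.mem_Ioo] at hz
    have hb : ∀ i, z i ^ 2 ≤ (1/(n+1) : ℝ) ^ 2 := by
      intro i
      have h1 := (hz i).1
      have h2 := (hz i).2
      nlinarith [sq_nonneg (z i)]
    have : Q z ≤ n * (1/(n+1) : ℝ) ^ 2 := by
      calc Q z ≤ ∑ _i : Fin n, (1/(n+1) : ℝ) ^ 2 := Finset.sum_le_sum fun i _ => hb i
        _ = n * (1/(n+1) : ℝ) ^ 2 := by simp [Finset.sum_const, nsmul_eq_mul]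
    have hlt : (n : ℝ) * (1/(n+1) : ℝ) ^ 2 < 1 := by
      rw [div_pow, one_pow, mul_div, mul_one, div_lt_one (by positivity)]
      have : (n : ℝ) ≥ 0 := Nat.cast_nonneg n
      nlinarith
    simp only [Set.mem_setOf_eq]
    linarith
  refine lt_of_lt_of_le ?_ (measure_mono hsub)
  rw [volume_pi_pi]
  rw [show (fun _ : Fin n => volume (Ioo (-(1/(n+1) : ℝ)) (1/(n+1)))) =
    fun _ : Fin n => ENNReal.ofReal (2/(n+1)) by
      funext i
      rw [Real.volume_Ioo]
      congr 1
      ring]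
  rw [Finset.prod_const]
  refine pos_iff_ne_zero.2 (pow_ne_zero _ ?_)
  simp only [ne_eq, ENNReal.ofReal_eq_zero, not_le]
  positivity

lemma W_ne_top {n : ℕ} : W n ≠ ⊤ := by
  have hsub : {z : Fin n → ℝ | Q z < 1}
      ⊆ Set.pi Set.univ fun _ : Fin n => Icc (-1 : ℝ) 1 := by
    intro z hz
    simp only [Set.mem_setOf_eq] at hz
    simp only [Set.mem_pi, Set.mem_univ, forall_true_left, Set.mem_Icc]
    intro i
    have h1 : z i ^ 2 ≤ Q z := by
      unfold Q
      exact Finset.single_le_sum (fun j _ => sq_nonneg (z j)) (Finset.mem_univ i)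
    constructor <;> nlinarith
  refine ne_top_of_le_ne_top ?_ (measure_mono hsub)
  rw [volume_pi_pi]
  simp [ENNReal.prod_ne_top, ENNReal.ofReal_ne_top]

lemma vol_Q_lt {n : ℕ} (hn : 0 < n) {r : ℝ} (hr : 0 ≤ r) :
    volume {z : Fin n → ℝ | Q z < r ^ 2} = ENNReal.ofReal (r ^ n) * W n := by
  rcases eq_or_lt_of_le hr with h0 | hrpos
  · have he : {z : Fin n → ℝ | Q z < r ^ 2} = ∅ := by
      ext z
      simp only [Set.mem_setOf_eq, Set.mem_empty_iff_false, iff_false, not_lt, ← h0]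
      simpa using Q_nonneg z
    rw [he, ← h0]
    simp [zero_pow hn.ne', measure_empty]
  · have hset : {z : Fin n → ℝ | Q z < r ^ 2} = r • {z : Fin n → ℝ | Q z < 1} := by
      ext z
      rw [Set.mem_smul_set_iff_inv_smul_mem₀ hrpos.ne']
      simp only [Set.mem_setOf_eq, Q_smul]
      rw [inv_pow]
      rw [inv_mul_lt_iff₀ (by positivity), mul_one]
    rw [hset, Measure.addHaar_smul_of_nonneg volume hr, W]
    congr 2
    simp [Module.finrank_fin_fun]

/-- Slicing: volume of `{p | p.1 ∈ T, Q p.2 < g p.1 ^ 2}`. -/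
lemma vol_slab {n : ℕ} (hn : 0 < n) {T : Set ℝ} (hT : MeasurableSet T) {g : ℝ → ℝ}
    (hg : Continuous g) (hg0 : ∀ t, 0 ≤ g t) :
    volume {p : ℝ × (Fin n → ℝ) | p.1 ∈ T ∧ Q p.2 < g p.1 ^ 2}
      = (∫⁻ t in T, ENNReal.ofReal (g t ^ n)) * W n := by
  have hmeas : MeasurableSet {p : ℝ × (Fin n → ℝ) | p.1 ∈ T ∧ Q p.2 < g p.1 ^ 2} := by
    apply MeasurableSet.inter
    · exact measurable_fst hT
    · exact (isOpen_lt (continuous_Q.comp continuous_snd)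
        ((hg.comp continuous_fst).pow 2)).measurableSet
  have hfm : Measurable fun t : ℝ => ENNReal.ofReal (g t ^ n) :=
    ((hg.pow n).measurable).ennreal_ofReal
  rw [MeasureTheory.Measure.volume_eq_prod, Measure.prod_apply hmeas,
    ← lintegral_mul_const _ hfm, ← lintegral_indicator hT]
  congr 1
  funext t
  by_cases ht : t ∈ T
  · have hpre : Prod.mk t ⁻¹' {p : ℝ × (Fin n → ℝ) | p.1 ∈ T ∧ Q p.2 < g p.1 ^ 2}
        = {z : Fin n → ℝ | Q z < g t ^ 2} := by
      ext z; simp [ht]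
    rw [hpre, vol_Q_lt hn (hg0 t), Set.indicator_of_mem ht]
  · have hpre : Prod.mk t ⁻¹' {p : ℝ × (Fin n → ℝ) | p.1 ∈ T ∧ Q p.2 < g p.1 ^ 2}
        = (∅ : Set (Fin n → ℝ)) := by
      ext z; simp [ht]
    rw [hpre, Set.indicator_of_notMem ht]
    simp

lemma gauss_bound {n : ℕ} (hn : 0 < n) :
    (∫⁻ t : ℝ, ENNReal.ofReal (Real.sqrt (1 - t ^ 2) ^ n))
      ≤ ENNReal.ofReal (Real.sqrt (2 * π / n)) := by
  have hpt : ∀ t : ℝ, Real.sqrt (1 - t ^ 2) ^ n ≤ Real.exp (-(n / 2 : ℝ) * t ^ 2) := by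
    intro t
    have h1 : Real.sqrt (1 - t ^ 2) ≤ Real.exp (-(t ^ 2) / 2) := by
      have he : Real.exp (-(t ^ 2)) = Real.exp (-(t ^ 2) / 2) ^ 2 := by
        rw [← Real.exp_nat_mul]
        congr 1
        push_cast
        ring
      have h2 : (1 - t ^ 2 : ℝ) ≤ Real.exp (-(t ^ 2)) := by
        have := Real.add_one_le_exp (-(t ^ 2))
        linarith
      calc Real.sqrt (1 - t ^ 2) ≤ Real.sqrt (Real.exp (-(t ^ 2))) := Real.sqrt_le_sqrt h2
        _ = Real.exp (-(t ^ 2) / 2) := by rw [he, Real.sqrt_sq (Real.exp_pos _).le]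
    calc Real.sqrt (1 - t ^ 2) ^ n ≤ Real.exp (-(t ^ 2) / 2) ^ n :=
        pow_le_pow_left₀ (Real.sqrt_nonneg _) h1 n
      _ = Real.exp (-(n / 2 : ℝ) * t ^ 2) := by
        rw [← Real.exp_nat_mul]
        congr 1
        ring
  have hint : Integrable (fun t : ℝ => Real.exp (-(n / 2 : ℝ) * t ^ 2)) :=
    integrable_exp_neg_mul_sq (by positivity)
  calc (∫⁻ t : ℝ, ENNReal.ofReal (Real.sqrt (1 - t ^ 2) ^ n))
      ≤ ∫⁻ t : ℝ, ENNReal.ofReal (Real.exp (-(n / 2 : ℝ) * t ^ 2)) :=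
        lintegral_mono fun t => ENNReal.ofReal_le_ofReal (hpt t)
    _ = ENNReal.ofReal (∫ t : ℝ, Real.exp (-(n / 2 : ℝ) * t ^ 2)) :=
        (ofReal_integral_eq_lintegral_ofReal hint
          (Filter.Eventually.of_forall fun t => (Real.exp_pos _).le)).symm
    _ = ENNReal.ofReal (Real.sqrt (2 * π / n)) := by
        rw [integral_gaussian]
        congr 1
        rw [div_div_eq_mul_div]
        ring_nf

lemma sqrt_pow_eq_rpow {a : ℝ} (ha : 0 ≤ a) (n : ℕ) :
    Real.sqrt a ^ n = a ^ ((n : ℝ) / 2) := by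
  rw [Real.sqrt_eq_rpow, ← Real.rpow_natCast (a ^ (1 / 2 : ℝ)) n, ← Real.rpow_mul ha]
  congr 1
  ring

/-- Conversion between `lintegral` on `Icc` and the interval integral. -/
lemma lint_Icc {a c : ℝ} (hac : a ≤ c) {f : ℝ → ℝ} (hf : Continuous f)
    (h0 : ∀ t, 0 ≤ f t) :
    ∫⁻ t in Icc a c, ENNReal.ofReal (f t) = ENNReal.ofReal (∫ t in a..c, f t) := by
  rw [intervalIntegral.integral_of_le hac,
    ofReal_integral_eq_lintegral_ofReal (hf.integrableOn_Ioc)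
      (Filter.Eventually.of_forall fun t => h0 t),
    ← restrict_Ioc_eq_restrict_Icc]

set_option maxHeartbeats 1000000 in
/-- The key lower bound for the slab integral. -/
lemma key_integral {n : ℕ} (hn : 3 ≤ n) {δ b : ℝ} (hδ0 : 0 < δ) (hδ2 : δ ^ 2 ≤ 1 / 2)
    (hb : b = Real.sqrt (δ ^ 2 + 4 * (1 - δ ^ 2) / ((n : ℝ) + 2))) :
    (1 - Real.exp (-2)) * (1 - δ ^ 2) ^ (((n : ℝ) + 2) / 2) / (((n : ℝ) + 2) * b)
      ≤ ∫ t in δ..b, Real.sqrt (1 - t ^ 2) ^ n := by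
  have hN3 : (3 : ℝ) ≤ (n : ℝ) := by exact_mod_cast hn
  set N : ℝ := (n : ℝ) with hN_def
  have hN2 : (0 : ℝ) < N + 2 := by linarith
  have hδ1 : δ ^ 2 < 1 := by linarith
  have h4 : (0:ℝ) ≤ 4 * (1 - δ ^ 2) / (N + 2) := div_nonneg (by linarith) hN2.le
  have hin0 : 0 ≤ δ ^ 2 + 4 * (1 - δ ^ 2) / (N + 2) := by positivity
  have hb2 : b ^ 2 = δ ^ 2 + 4 * (1 - δ ^ 2) / (N + 2) := by
    rw [hb]; exact Real.sq_sqrt hin0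
  have hb0 : 0 < b := by
    rw [hb]
    apply Real.sqrt_pos.2
    nlinarith
  have hδb : δ ≤ b := by
    rw [hb]
    calc δ = Real.sqrt (δ ^ 2) := (Real.sqrt_sq hδ0.le).symm
      _ ≤ Real.sqrt (δ ^ 2 + 4 * (1 - δ ^ 2) / (N + 2)) :=
        Real.sqrt_le_sqrt (by linarith)
  have hfrac1 : 4 / (N + 2) < 1 := by
    rw [div_lt_one hN2]; linarith
  have hfrac0 : 0 < 4 / (N + 2) := by positivity
  have hb1 : b ^ 2 < 1 := by
    have he : 4 * (1 - δ ^ 2) / (N + 2) = (1 - δ ^ 2) * (4 / (N + 2)) := by ring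
    rw [hb2, he]
    nlinarith
  set p : ℝ := (N + 2) / 2 with hp_def
  have hp1 : (1 : ℝ) ≤ p := by rw [hp_def]; linarith
  have hp0 : (0 : ℝ) ≤ p := by linarith
  -- continuity of the integrands
  have hcont : Continuous fun t : ℝ => Real.sqrt (1 - t ^ 2) ^ n :=
    (Real.continuous_sqrt.comp (continuous_const.sub (continuous_pow 2))).pow n
  have hcont2 : Continuous fun t : ℝ => t * Real.sqrt (1 - t ^ 2) ^ n :=
    continuous_id.mul hcont
  have hcont3 : Continuous fun t : ℝ => t / b * Real.sqrt (1 - t ^ 2) ^ n :=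
    (continuous_id.div_const b).mul hcont
  -- FTC
  have hderiv : ∀ t ∈ Set.uIcc δ b,
      HasDerivAt (fun s : ℝ => -((1 - s ^ 2) ^ p) / (N + 2))
        (t * Real.sqrt (1 - t ^ 2) ^ n) t := by
    intro t ht
    rw [Set.uIcc_of_le hδb] at ht
    obtain ⟨h1t, h2t⟩ := ht
    have ht0 : 0 < t := lt_of_lt_of_le hδ0 h1t
    have ht1 : t ^ 2 < 1 := by nlinarith
    have hbase : (0:ℝ) ≤ 1 - t ^ 2 := by linarith
    have h1 : HasDerivAt (fun s : ℝ => 1 - s ^ 2) (-(2 * t)) t := by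
      simpa using ((hasDerivAt_pow 2 t).const_sub 1)
    have h2 := h1.rpow_const (p := p) (Or.inr hp1)
    have h3 := (h2.div_const (N + 2)).neg
    have harg : -(-(2 * t) * p * (1 - t ^ 2) ^ (p - 1) / (N + 2))
        = t * Real.sqrt (1 - t ^ 2) ^ n := by
      rw [sqrt_pow_eq_rpow hbase n]
      rw [show p - 1 = N / 2 by rw [hp_def]; ring]
      rw [hp_def]
      field_simp
      ring
    rw [← harg]
    convert h3 using 2
    · rfl
    · rfl
    rw [Pi.neg_apply, neg_div]
  have hFTC : ∫ t in δ..b, t * Real.sqrt (1 - t ^ 2) ^ n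
      = ((1 - δ ^ 2) ^ p - (1 - b ^ 2) ^ p) / (N + 2) := by
    rw [intervalIntegral.integral_eq_sub_of_hasDerivAt hderiv
      (hcont2.intervalIntegrable δ b)]
    field_simp
    ring
  -- monotone comparison
  have hmono : ∫ t in δ..b, t / b * Real.sqrt (1 - t ^ 2) ^ n
      ≤ ∫ t in δ..b, Real.sqrt (1 - t ^ 2) ^ n := by
    apply intervalIntegral.integral_mono_on hδb
      (hcont3.intervalIntegrable δ b) (hcont.intervalIntegrable δ b)
    intro t ht
    have hnn : 0 ≤ Real.sqrt (1 - t ^ 2) ^ n := pow_nonneg (Real.sqrt_nonneg _) n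
    have htb : t / b ≤ 1 := (div_le_one hb0).2 ht.2
    exact mul_le_of_le_one_left hnn htb
  have hconst : ∫ t in δ..b, t / b * Real.sqrt (1 - t ^ 2) ^ n
      = b⁻¹ * ∫ t in δ..b, t * Real.sqrt (1 - t ^ 2) ^ n := by
    rw [← intervalIntegral.integral_const_mul]
    congr 1
    funext t
    ring
  -- the exponential bound on (1-b²)^p
  have hsplit : (1 : ℝ) - b ^ 2 = (1 - δ ^ 2) * (1 - 4 / (N + 2)) := by
    rw [hb2]
    field_simp
    ring
  have hbase2 : (0:ℝ) ≤ 1 - 4 / (N + 2) := by linarith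
  have hexp2 : (1 - b ^ 2) ^ p ≤ Real.exp (-2) * (1 - δ ^ 2) ^ p := by
    rw [hsplit, Real.mul_rpow (by linarith) hbase2]
    rw [mul_comm (Real.exp (-2))]
    apply mul_le_mul_of_nonneg_left _ (Real.rpow_nonneg (by linarith) p)
    have h1 : (1 : ℝ) - 4 / (N + 2) ≤ Real.exp (-(4 / (N + 2))) := by
      have := Real.add_one_le_exp (-(4 / (N + 2)))
      linarith
    calc (1 - 4 / (N + 2)) ^ p ≤ Real.exp (-(4 / (N + 2))) ^ p :=
        Real.rpow_le_rpow hbase2 h1 hp0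
      _ = Real.exp (-(4 / (N + 2)) * p) := by rw [← Real.exp_mul]
      _ = Real.exp (-2) := by
          congr 1
          rw [hp_def]
          field_simp
          ring
  -- put everything together
  have hrpow0 : (0:ℝ) ≤ (1 - δ ^ 2) ^ p := Real.rpow_nonneg (by linarith) p
  have hnum : (1 - Real.exp (-2)) * (1 - δ ^ 2) ^ p
      ≤ (1 - δ ^ 2) ^ p - (1 - b ^ 2) ^ p := by nlinarith
  calc (1 - Real.exp (-2)) * (1 - δ ^ 2) ^ p / ((N + 2) * b)
      ≤ ((1 - δ ^ 2) ^ p - (1 - b ^ 2) ^ p) / ((N + 2) * b) := by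
        exact (div_le_div_iff_of_pos_right (mul_pos hN2 hb0)).2 hnum
    _ = b⁻¹ * (((1 - δ ^ 2) ^ p - (1 - b ^ 2) ^ p) / (N + 2)) := by
        rw [div_eq_mul_inv, div_eq_mul_inv, mul_inv]
        ring
    _ = b⁻¹ * ∫ t in δ..b, t * Real.sqrt (1 - t ^ 2) ^ n := by rw [hFTC]
    _ = ∫ t in δ..b, t / b * Real.sqrt (1 - t ^ 2) ^ n := hconst.symm
    _ ≤ ∫ t in δ..b, Real.sqrt (1 - t ^ 2) ^ n := hmono

end Stmt12Aux

open Stmt12Aux Real Set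
open scoped Pointwise ENNReal

set_option maxHeartbeats 1600000 in
theorem stmt12 (k : ℕ) (δ : ℝ) (hδ : 0 < δ) (hδ' : δ ≤ 1 / Real.sqrt 2)
    (hk : 2 / δ ^ 2 ≤ (k : ℝ)) (x : EuclideanSpace ℝ (Fin k)) (hx : ‖x‖ = 1) :
    ENNReal.ofReal (Real.exp (-2 * δ ^ 2 * k)) ≤
      unifSphere k {v | δ ≤ |⟪(v : EuclideanSpace ℝ (Fin k)), x⟫|} := by
  classical
  have hδ2 : δ ^ 2 ≤ 1 / 2 := by
    have h2 : (0:ℝ) < Real.sqrt 2 := Real.sqrt_pos.2 (by norm_num)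
    have h2' : Real.sqrt 2 ^ 2 = 2 := Real.sq_sqrt (by norm_num)
    have h3 : δ ^ 2 ≤ (1 / Real.sqrt 2) ^ 2 := by nlinarith
    rw [div_pow, one_pow, h2'] at h3
    linarith
  have hδ1 : δ ^ 2 < 1 := by linarith
  have hδsq : (0:ℝ) < δ ^ 2 := by positivity
  have hk2 : 2 ≤ δ ^ 2 * (k : ℝ) := by
    have h := (div_le_iff₀ hδsq).1 hk
    linarith
  have hk4 : (4:ℝ) ≤ (k:ℝ) := by nlinarith
  have hk4' : 4 ≤ k := by exact_mod_cast hk4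
  obtain ⟨n, rfl⟩ : ∃ n, k = n + 1 := ⟨k - 1, by omega⟩
  have hn3 : 3 ≤ n := by omega
  have hn0 : 0 < n := by omega
  have hN3 : (3:ℝ) ≤ (n:ℝ) := by exact_mod_cast hn3
  have hN2 : (0:ℝ) < (n:ℝ) + 2 := by linarith
  -- the measurable target set
  set A : Set (sphere (0 : EuclideanSpace ℝ (Fin (n+1))) 1) :=
    {v | δ ≤ |⟪(v : EuclideanSpace ℝ (Fin (n+1))), x⟫|} with hA_def
  have hA : MeasurableSet A := by
    have hc : Continuous fun v : sphere (0 : EuclideanSpace ℝ (Fin (n+1))) 1 =>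
        |⟪(v : EuclideanSpace ℝ (Fin (n+1))), x⟫| :=
      (continuous_subtype_val.inner continuous_const).abs
    have : A = (fun v : sphere (0 : EuclideanSpace ℝ (Fin (n+1))) 1 =>
        |⟪(v : EuclideanSpace ℝ (Fin (n+1))), x⟫|) ⁻¹' (Set.Ici δ) := rfl
    rw [this]
    exact hc.measurable measurableSet_Ici
  -- cone inclusion
  have hcone : {y : EuclideanSpace ℝ (Fin (n+1)) | ‖y‖ < 1 ∧ δ ≤ |⟪y, x⟫|}
      ⊆ Set.Ioo (0:ℝ) 1 • ((↑) '' A : Set (EuclideanSpace ℝ (Fin (n+1)))) := by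
    rintro y ⟨hy1, hy2⟩
    have hcs : |⟪y, x⟫| ≤ ‖y‖ * ‖x‖ := abs_real_inner_le_norm y x
    rw [hx, mul_one] at hcs
    have hyδ : δ ≤ ‖y‖ := le_trans hy2 hcs
    have hy0 : 0 < ‖y‖ := lt_of_lt_of_le hδ hyδ
    have hsph : ‖(‖y‖⁻¹ • y : EuclideanSpace ℝ (Fin (n+1)))‖ = 1 := by
      rw [norm_smul, norm_inv, norm_norm, inv_mul_cancel₀ hy0.ne']
    refine ⟨‖y‖, ⟨hy0, hy1⟩, (‖y‖⁻¹ • y : EuclideanSpace ℝ (Fin (n+1))), ?_, ?_⟩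
    · refine ⟨⟨(‖y‖⁻¹ • y : EuclideanSpace ℝ (Fin (n+1))), ?_⟩, ?_, rfl⟩
      · simpa [mem_sphere_iff_norm] using hsph
      · show δ ≤ |⟪(‖y‖⁻¹ • y : EuclideanSpace ℝ (Fin (n+1))), x⟫|
        rw [real_inner_smul_left, abs_mul, abs_inv, abs_norm]
        have h1 : (1:ℝ) ≤ ‖y‖⁻¹ := (one_le_inv₀ hy0).2 hy1.le
        calc δ = 1 * δ := (one_mul δ).symm
          _ ≤ ‖y‖⁻¹ * |⟪y, x⟫| := by
            apply mul_le_mul h1 hy2 hδ.le (by positivity)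
    · exact smul_inv_smul₀ hy0.ne' y
  -- reflection taking x to the first basis vector
  set e₀ : EuclideanSpace ℝ (Fin (n+1)) := EuclideanSpace.single (0 : Fin (n+1)) (1:ℝ)
    with he₀_def
  have he₀ : ‖e₀‖ = 1 := by simp [he₀_def]
  set f : EuclideanSpace ℝ (Fin (n+1)) ≃ₗᵢ[ℝ] EuclideanSpace ℝ (Fin (n+1)) :=
    Submodule.reflection (ℝ ∙ (x - e₀))ᗮ with hf_def
  have hfx : f x = e₀ := Submodule.reflection_sub (by rw [hx, he₀])
  have hfmp : MeasurePreserving f volume volume := f.measurePreserving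
  -- the coordinate chart
  set Φ : EuclideanSpace ℝ (Fin (n+1)) → ℝ × (Fin n → ℝ) :=
    fun y => (MeasurableEquiv.piFinSuccAbove (fun _ : Fin (n+1) => ℝ) 0)
      ((MeasurableEquiv.toLp 2 (Fin (n+1) → ℝ)).symm (f y)) with hΦ_def
  have hΦmp : MeasurePreserving Φ volume volume :=
    ((volume_preserving_piFinSuccAbove (fun _ : Fin (n+1) => ℝ) 0).comp
      (EuclideanSpace.volume_preserving_symm_measurableEquiv_toLp (Fin (n+1)))).comp hfmp
  have hΦ1 : ∀ y, (Φ y).1 = f y 0 := fun y => rfl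
  have hΦ2 : ∀ y, (Φ y).2 = fun j => f y (Fin.succ j) := fun y => rfl
  -- basic identities
  have hnorm_sq : ∀ y : EuclideanSpace ℝ (Fin (n+1)),
      ‖y‖ ^ 2 = (Φ y).1 ^ 2 + Q (Φ y).2 := by
    intro y
    have h1 : ‖y‖ = ‖f y‖ := (f.norm_map y).symm
    rw [h1, EuclideanSpace.norm_eq, Real.sq_sqrt (by positivity), hΦ1, hΦ2]
    rw [Fin.sum_univ_succ]
    simp [Q, Real.norm_eq_abs, sq_abs]
  have hinner : ∀ y : EuclideanSpace ℝ (Fin (n+1)), ⟪y, x⟫ = (Φ y).1 := by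
    intro y
    have h1 : ⟪y, x⟫ = ⟪f y, f x⟫ := (f.inner_map_map y x).symm
    rw [h1, hfx, he₀_def, EuclideanSpace.inner_single_right, hΦ1]
    simp
  have hnormlt : ∀ y : EuclideanSpace ℝ (Fin (n+1)),
      (‖y‖ < 1 ↔ (Φ y).1 ^ 2 + Q (Φ y).2 < 1) := by
    intro y
    rw [← hnorm_sq y]
    constructor
    · intro h; nlinarith [norm_nonneg y]
    · intro h; nlinarith [norm_nonneg y]
  -- transported sets
  set D1 : Set (ℝ × (Fin n → ℝ)) := {p | p.1 ^ 2 + Q p.2 < 1 ∧ δ ≤ |p.1|} with hD1_def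
  have hD1meas : MeasurableSet D1 := by
    apply MeasurableSet.inter
    · exact (isOpen_lt (((continuous_fst.pow 2)).add
        (continuous_Q.comp continuous_snd)) continuous_const).measurableSet
    · exact measurable_fst.abs measurableSet_Ici
  have hDeq : volume {y : EuclideanSpace ℝ (Fin (n+1)) | ‖y‖ < 1 ∧ δ ≤ |⟪y, x⟫|}
      = volume D1 := by
    rw [show {y : EuclideanSpace ℝ (Fin (n+1)) | ‖y‖ < 1 ∧ δ ≤ |⟪y, x⟫|} = Φ ⁻¹' D1 from ?_]
    · exact hΦmp.measure_preimage hD1meas.nullMeasurableSet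
    · ext y
      simp only [Set.mem_setOf_eq, Set.mem_preimage, hD1_def]
      rw [hnormlt y, hinner y]
  have hBeq : volume (ball (0 : EuclideanSpace ℝ (Fin (n+1))) 1)
      = volume {p : ℝ × (Fin n → ℝ) | p.1 ^ 2 + Q p.2 < 1} := by
    rw [show ball (0 : EuclideanSpace ℝ (Fin (n+1))) 1
        = Φ ⁻¹' {p : ℝ × (Fin n → ℝ) | p.1 ^ 2 + Q p.2 < 1} from ?_]
    · apply hΦmp.measure_preimage
      exact (isOpen_lt (((continuous_fst.pow 2)).add
        (continuous_Q.comp continuous_snd)) continuous_const).measurableSet.nullMeasurableSet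
    · ext y
      simp only [mem_ball, dist_zero_right, Set.mem_preimage, Set.mem_setOf_eq]
      exact hnormlt y
  -- the slab sets
  set g : ℝ → ℝ := fun t => Real.sqrt (1 - t ^ 2) with hg_def
  have hgc : Continuous g := Real.continuous_sqrt.comp (continuous_const.sub (continuous_pow 2))
  have hg0 : ∀ t, 0 ≤ g t := fun t => Real.sqrt_nonneg _
  set b : ℝ := Real.sqrt (δ ^ 2 + 4 * (1 - δ ^ 2) / ((n:ℝ) + 2)) with hb_def
  have h4 : (0:ℝ) ≤ 4 * (1 - δ ^ 2) / ((n:ℝ) + 2) := div_nonneg (by linarith) hN2.le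
  have hb0 : 0 < b := by
    rw [hb_def]; apply Real.sqrt_pos.2; nlinarith
  have hδb : δ ≤ b := by
    rw [hb_def]
    calc δ = Real.sqrt (δ ^ 2) := (Real.sqrt_sq hδ.le).symm
      _ ≤ Real.sqrt (δ ^ 2 + 4 * (1 - δ ^ 2) / ((n:ℝ) + 2)) :=
        Real.sqrt_le_sqrt (by linarith)
  set SLp : Set (ℝ × (Fin n → ℝ)) := {p | p.1 ∈ Icc δ b ∧ Q p.2 < g p.1 ^ 2} with hSLp_def
  set SLm : Set (ℝ × (Fin n → ℝ)) := {p | p.1 ∈ Icc (-b) (-δ) ∧ Q p.2 < g p.1 ^ 2}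
    with hSLm_def
  have hSLpmeas : MeasurableSet SLp := by
    apply MeasurableSet.inter
    · exact measurable_fst measurableSet_Icc
    · exact (isOpen_lt (continuous_Q.comp continuous_snd)
        ((hgc.comp continuous_fst).pow 2)).measurableSet
  have hSLmmeas : MeasurableSet SLm := by
    apply MeasurableSet.inter
    · exact measurable_fst measurableSet_Icc
    · exact (isOpen_lt (continuous_Q.comp continuous_snd)
        ((hgc.comp continuous_fst).pow 2)).measurableSet
  -- both slabs are in D1
  have hQlt : ∀ p : ℝ × (Fin n → ℝ), Q p.2 < g p.1 ^ 2 → p.1 ^ 2 + Q p.2 < 1 := by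
    intro p hp
    rcases le_or_gt 0 (1 - p.1 ^ 2) with h | h
    · rw [hg_def] at hp
      simp only at hp
      rw [Real.sq_sqrt h] at hp
      linarith
    · exfalso
      have h0 : g p.1 = 0 := by
        rw [hg_def]
        simp only
        exact Real.sqrt_eq_zero_of_nonpos h.le
      rw [h0] at hp
      nlinarith [Q_nonneg p.2]
  have hsubp : SLp ⊆ D1 := by
    rintro p ⟨hp1, hp2⟩
    refine ⟨hQlt p hp2, ?_⟩
    have := hp1.1
    rw [abs_of_pos (lt_of_lt_of_le hδ this)]
    exact this
  have hsubm : SLm ⊆ D1 := by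
    rintro p ⟨hp1, hp2⟩
    refine ⟨hQlt p hp2, ?_⟩
    have h2 := hp1.2
    rw [abs_of_neg (lt_of_le_of_lt h2 (by linarith))]
    linarith
  have hdisj : Disjoint SLp SLm := by
    rw [Set.disjoint_left]
    rintro p ⟨hp1, _⟩ ⟨hp2, _⟩
    have h1 := hp1.1
    have h2 := hp2.2
    linarith
  -- the two slabs have the same volume
  have hSLm_vol : volume SLm = volume SLp := by
    have hneg : MeasurePreserving (Prod.map (fun t : ℝ => -t) (id : (Fin n → ℝ) → Fin n → ℝ))
        volume volume :=
      (Measure.measurePreserving_neg volume).prod (MeasurePreserving.id volume)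
    rw [show SLm = (Prod.map (fun t : ℝ => -t) (id : (Fin n → ℝ) → Fin n → ℝ)) ⁻¹' SLp from ?_]
    · exact hneg.measure_preimage hSLpmeas.nullMeasurableSet
    · ext p
      have hge : g (-p.1) = g p.1 := by
        rw [hg_def]
        simp only [neg_sq]
      constructor
      · rintro ⟨hp1, hq⟩
        rw [Set.mem_preimage]
        refine ⟨?_, ?_⟩
        · rw [Set.mem_Icc] at hp1 ⊢
          constructor <;> [skip; skip] <;> simp only [Prod.map_fst] <;> linarith [hp1.1, hp1.2]
        · simpa [hge] using hq
      · intro hp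
        rw [Set.mem_preimage] at hp
        obtain ⟨hp1, hq⟩ := hp
        refine ⟨?_, ?_⟩
        · rw [Set.mem_Icc] at hp1 ⊢
          simp only [Prod.map_fst] at hp1
          constructor <;> linarith [hp1.1, hp1.2]
        · rw [show Q ((Prod.map (fun t : ℝ => -t) (id : (Fin n → ℝ) → Fin n → ℝ)) p).2
              = Q p.2 from rfl, show ((Prod.map (fun t : ℝ => -t)
              (id : (Fin n → ℝ) → Fin n → ℝ)) p).1 = -p.1 from rfl, hge] at hq
          exact hq
  -- volumes of the slabs and of the ball via slicing
  have hSLp_vol : volume SLp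
      = ENNReal.ofReal (∫ t in δ..b, g t ^ n) * W n := by
    rw [hSLp_def, vol_slab hn0 measurableSet_Icc hgc hg0]
    congr 1
    exact lint_Icc hδb (hgc.pow n) (fun t => pow_nonneg (hg0 t) n)
  have hBall_le : volume {p : ℝ × (Fin n → ℝ) | p.1 ^ 2 + Q p.2 < 1}
      ≤ ENNReal.ofReal (Real.sqrt (2 * π / (n:ℝ))) * W n := by
    have heq : {p : ℝ × (Fin n → ℝ) | p.1 ^ 2 + Q p.2 < 1}
        = {p : ℝ × (Fin n → ℝ) | p.1 ∈ (Set.univ : Set ℝ) ∧ Q p.2 < g p.1 ^ 2} := by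
      ext p
      simp only [Set.mem_setOf_eq, Set.mem_univ, true_and]
      constructor
      · intro h
        have h1 : 0 ≤ 1 - p.1 ^ 2 := by nlinarith [Q_nonneg p.2]
        rw [hg_def]
        simp only
        rw [Real.sq_sqrt h1]
        linarith
      · exact hQlt p
    rw [heq, vol_slab hn0 MeasurableSet.univ hgc hg0]
    apply mul_le_mul_left
    rw [Measure.restrict_univ]
    exact gauss_bound hn0
  -- the real-variable inequality
  have hvN : 2 ≤ δ ^ 2 * ((n:ℝ) + 1) := by
    have : ((n:ℝ) + 1) = ((n + 1 : ℕ) : ℝ) := by push_cast; ring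
    rw [this]
    exact hk2
  have hcore := Stmt12Aux.core hN3 hδsq hδ2 hvN
  have hkey_int := Stmt12Aux.key_integral hn3 hδ hδ2 hb_def
  have hNb : 0 < ((n:ℝ) + 2) * b := mul_pos hN2 hb0
  have hreal : Real.exp (-(2 * δ ^ 2 * ((n:ℝ) + 1))) * Real.sqrt (2 * π / (n:ℝ))
      ≤ 2 * ∫ t in δ..b, g t ^ n := by
    have h1 : Real.exp (-(2 * δ ^ 2 * ((n:ℝ) + 1))) * Real.sqrt (2 * π / (n:ℝ))
        ≤ 2 * (1 - Real.exp (-2)) * (1 - δ ^ 2) ^ (((n:ℝ) + 2) / 2) / (((n:ℝ) + 2) * b) := by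
      rw [le_div_iff₀ hNb]
      calc Real.exp (-(2 * δ ^ 2 * ((n:ℝ) + 1))) * Real.sqrt (2 * π / (n:ℝ))
            * (((n:ℝ) + 2) * b)
          = Real.exp (-(2 * δ ^ 2 * ((n:ℝ) + 1))) * Real.sqrt (2 * π / (n:ℝ)) *
            (((n:ℝ) + 2) * Real.sqrt (δ ^ 2 + 4 * (1 - δ ^ 2) / ((n:ℝ) + 2))) := by
            rw [← hb_def]
        _ ≤ 2 * (1 - Real.exp (-2)) * (1 - δ ^ 2) ^ (((n:ℝ) + 2) / 2) := hcore
    have h2 : 2 * (1 - Real.exp (-2)) * (1 - δ ^ 2) ^ (((n:ℝ) + 2) / 2) / (((n:ℝ) + 2) * b)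
        = 2 * ((1 - Real.exp (-2)) * (1 - δ ^ 2) ^ (((n:ℝ) + 2) / 2) / (((n:ℝ) + 2) * b)) := by
      ring
    have h3 : (1 - Real.exp (-2)) * (1 - δ ^ 2) ^ (((n:ℝ) + 2) / 2) / (((n:ℝ) + 2) * b)
        ≤ ∫ t in δ..b, g t ^ n := by
      calc (1 - Real.exp (-2)) * (1 - δ ^ 2) ^ (((n:ℝ) + 2) / 2) / (((n:ℝ) + 2) * b)
          ≤ ∫ t in δ..b, Real.sqrt (1 - t ^ 2) ^ n := hkey_int
        _ = ∫ t in δ..b, g t ^ n := by rw [hg_def]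
    linarith
  -- key ENNReal inequality
  set C := volume (Set.Ioo (0:ℝ) 1 • ((↑) '' A : Set (EuclideanSpace ℝ (Fin (n+1)))))
    with hC_def
  set B := volume (ball (0 : EuclideanSpace ℝ (Fin (n+1))) 1) with hB_def
  have hexp0 : 0 ≤ Real.exp (-(2 * δ ^ 2 * ((n:ℝ) + 1))) := (Real.exp_pos _).le
  have hKey : ENNReal.ofReal (Real.exp (-(2 * δ ^ 2 * ((n:ℝ) + 1)))) * B ≤ C := by
    have hD1_lb : 2 * volume SLp ≤ volume D1 := by
      calc 2 * volume SLp = volume SLp + volume SLm := by rw [hSLm_vol, two_mul]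
        _ = volume (SLp ∪ SLm) := (measure_union hdisj hSLmmeas).symm
        _ ≤ volume D1 := measure_mono (Set.union_subset hsubp hsubm)
    calc ENNReal.ofReal (Real.exp (-(2 * δ ^ 2 * ((n:ℝ) + 1)))) * B
        = ENNReal.ofReal (Real.exp (-(2 * δ ^ 2 * ((n:ℝ) + 1)))) *
          volume {p : ℝ × (Fin n → ℝ) | p.1 ^ 2 + Q p.2 < 1} := by rw [hBeq]
      _ ≤ ENNReal.ofReal (Real.exp (-(2 * δ ^ 2 * ((n:ℝ) + 1)))) *
          (ENNReal.ofReal (Real.sqrt (2 * π / (n:ℝ))) * W n) :=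
            mul_le_mul_right hBall_le _
      _ = ENNReal.ofReal (Real.exp (-(2 * δ ^ 2 * ((n:ℝ) + 1))) *
          Real.sqrt (2 * π / (n:ℝ))) * W n := by
            rw [ENNReal.ofReal_mul hexp0]
            ring
      _ ≤ ENNReal.ofReal (2 * ∫ t in δ..b, g t ^ n) * W n := by
            exact mul_le_mul_left (ENNReal.ofReal_le_ofReal hreal) _
      _ = 2 * (ENNReal.ofReal (∫ t in δ..b, g t ^ n) * W n) := by
            rw [ENNReal.ofReal_mul (by norm_num : (0:ℝ) ≤ 2)]
            rw [mul_assoc]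
            congr 1
            norm_num
      _ = 2 * volume SLp := by rw [hSLp_vol]
      _ ≤ volume D1 := hD1_lb
      _ = volume {y : EuclideanSpace ℝ (Fin (n+1)) | ‖y‖ < 1 ∧ δ ≤ |⟪y, x⟫|} := hDeq.symm
      _ ≤ C := by
          rw [hC_def]
          exact measure_mono hcone
  -- unfold the uniform measure and conclude
  have hB0 : B ≠ 0 := (measure_ball_pos _ _ one_pos).ne'
  have hBtop : B ≠ ⊤ := measure_ball_lt_top.ne
  have hdim : (Module.finrank ℝ (EuclideanSpace ℝ (Fin (n+1))) : ℝ≥0∞) = ((n+1 : ℕ) : ℝ≥0∞) := by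
    congr 1
    exact finrank_euclideanSpace_fin
  have husph : unifSphere (n+1) A = (((n+1 : ℕ) : ℝ≥0∞) * B)⁻¹ * (((n+1 : ℕ) : ℝ≥0∞) * C) := by
    rw [unifSphere, Measure.smul_apply, smul_eq_mul,
      Measure.toSphere_apply' _ hA, Measure.toSphere_apply_univ, hdim, ← hB_def, ← hC_def]
  have hNB0 : ((n+1 : ℕ) : ℝ≥0∞) * B ≠ 0 := by
    apply mul_ne_zero _ hB0
    exact_mod_cast Nat.succ_ne_zero n
  have hNBtop : ((n+1 : ℕ) : ℝ≥0∞) * B ≠ ⊤ :=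
    ENNReal.mul_ne_top (ENNReal.natCast_ne_top _) hBtop
  have hcast : ENNReal.ofReal (Real.exp (-2 * δ ^ 2 * ((n+1 : ℕ) : ℝ)))
      = ENNReal.ofReal (Real.exp (-(2 * δ ^ 2 * ((n:ℝ) + 1)))) := by
    congr 2
    push_cast
    ring
  rw [hcast, husph]
  calc ENNReal.ofReal (Real.exp (-(2 * δ ^ 2 * ((n:ℝ) + 1))))
      = ENNReal.ofReal (Real.exp (-(2 * δ ^ 2 * ((n:ℝ) + 1)))) *
        ((((n+1 : ℕ) : ℝ≥0∞) * B)⁻¹ * (((n+1 : ℕ) : ℝ≥0∞) * B)) := by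
        rw [ENNReal.inv_mul_cancel hNB0 hNBtop, mul_one]
    _ = (((n+1 : ℕ) : ℝ≥0∞) * B)⁻¹ * (((n+1 : ℕ) : ℝ≥0∞) *
        (ENNReal.ofReal (Real.exp (-(2 * δ ^ 2 * ((n:ℝ) + 1)))) * B)) := by
        ring
    _ ≤ (((n+1 : ℕ) : ℝ≥0∞) * B)⁻¹ * (((n+1 : ℕ) : ℝ≥0∞) * C) := by
        exact mul_le_mul_right (mul_le_mul_right hKey _) _
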